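/- Define a labelling function b on bracketings by: b(t) = 0 if t is a single leaf, and b(t) = (Σ_{i=1}^{m−1} Cᵢ·Cₙ₋ᵢ) + b(t_ρ)·Cₙ₋ₘ + b(t_λ) if t = t_λ·t_ρ has n leaves, where t_λ is the left subtree with n − m leaves and t_ρ is the right subtree with m leaves. Then for every n ≥ 1, the map t ↦ b(t) is a bijection from the set of bracketings with n leaves onto {0, 1, …, Cₙ − 1}. -/

import Mathlib

/-- Bracketings: full binary trees in which every internal node has two children. -/
inductive Brack : Type
  | leaf : Brack
  | node : Brack → Brack → Brack

/-- Number of leaves of a bracketing. -/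
def Brack.leaves : Brack → ℕ
  | .leaf => 1
  | .node l r => l.leaves + r.leaves


/-- The labelling of bracketings: `b(leaf) = 0` and, if `t = t_λ · t_ρ` has `n` leaves
with `t_ρ` having `m` leaves, `b(t) = Σ_{i=1}^{m−1} Cᵢ·Cₙ₋ᵢ + b(t_ρ)·Cₙ₋ₘ + b(t_λ)`,
where `Cⱼ = catalan (j − 1)` is the number of bracketings with `j` leaves. -/
def blabel : Brack → ℕ
  | .leaf => 0
  | .node l r =>
      (∑ i ∈ Finset.Ico 1 r.leaves,
        catalan (i - 1) * catalan (l.leaves + r.leaves - i - 1)) +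
      blabel r * catalan (l.leaves - 1) + blabel l

namespace Stmt18Aux

lemma catalan_pos' (n : ℕ) : 0 < catalan n := by
  induction n using Nat.strong_induction_on with
  | _ n IH =>
  cases n with
  | zero => simp
  | succ m =>
    rw [catalan_succ]
    have h0 : 0 < catalan ((0 : Fin m.succ) : ℕ) * catalan (m - ((0 : Fin m.succ) : ℕ)) := by
      simpa using IH m (by omega)
    exact lt_of_lt_of_le h0 (Finset.single_le_sum
      (f := fun i : Fin m.succ => catalan i * catalan (m - i))
      (fun i _ => Nat.zero_le _) (Finset.mem_univ 0))

/-- Partial sums `S n m = Σ_{i=1}^{m-1} C_i C_{n-i}`. -/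
def S (n m : ℕ) : ℕ := ∑ i ∈ Finset.Ico 1 m, catalan (i-1) * catalan (n - i - 1)

lemma S_succ (n m : ℕ) (hm : 1 ≤ m) :
    S n (m+1) = S n m + catalan (m-1) * catalan (n - m - 1) :=
  Finset.sum_Ico_succ_top hm _

lemma S_mono (n : ℕ) {a b : ℕ} (h : a ≤ b) : S n a ≤ S n b :=
  Finset.sum_le_sum_of_subset (Finset.Ico_subset_Ico le_rfl h)

lemma S_top (k : ℕ) : S (k+2) (k+2) = catalan (k+1) := by
  have h2 : catalan (k+1) = ∑ j ∈ Finset.range (k+1), catalan j * catalan (k - j) := by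
    rw [catalan_succ]
    exact Fin.sum_univ_eq_sum_range (fun i => catalan i * catalan (k - i)) (k+1)
  rw [S, h2, Finset.sum_Ico_eq_sum_range]
  apply Finset.sum_congr (by norm_num)
  intro j hj
  simp only [Finset.mem_range] at hj
  congr 1
  · congr 1; omega
  · congr 1; omega

lemma one_le_leaves (t : Brack) : 1 ≤ t.leaves := by
  induction t with
  | leaf => simp [Brack.leaves]
  | node l r ihl ihr => simp only [Brack.leaves]; omega

lemma leaves_eq_one {t : Brack} (h : t.leaves = 1) : t = .leaf := by
  cases t with
  | leaf => rfl
  | node l r =>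
    have := one_le_leaves l; have := one_le_leaves r
    simp only [Brack.leaves] at h; omega

lemma blabel_node (l r : Brack) :
    blabel (.node l r) = S (l.leaves + r.leaves) r.leaves
      + blabel r * catalan (l.leaves - 1) + blabel l := rfl

/-- interval bounds for a composite label -/
lemma interval_bound {n m q rem : ℕ} (hm1 : 1 ≤ m) (hmn : m + 1 ≤ n) (hn : 2 ≤ n)
    (hq : q < catalan (m-1)) (hrem : rem < catalan (n-m-1)) :
    S n m + q * catalan (n-m-1) + rem < catalan (n-1) := by
  have h1 : S n m + q * catalan (n-m-1) + rem < S n (m+1) := by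
    rw [S_succ n m hm1]
    have : q * catalan (n-m-1) + rem < catalan (m-1) * catalan (n-m-1) := by
      calc q * catalan (n-m-1) + rem < q * catalan (n-m-1) + catalan (n-m-1) := by omega
        _ = (q+1) * catalan (n-m-1) := by ring
        _ ≤ catalan (m-1) * catalan (n-m-1) := Nat.mul_le_mul_right _ (by omega)
    omega
  have h2 : S n (m+1) ≤ S n n := S_mono n hmn
  obtain ⟨k, rfl⟩ : ∃ k, n = k + 2 := ⟨n - 2, by omega⟩
  have h3 : S (k+2) (k+2) = catalan (k+1) := S_top k
  simp only [show k + 2 - 1 = k + 1 from rfl]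
  omega

theorem main : ∀ n, 1 ≤ n →
    Set.BijOn blabel {t : Brack | t.leaves = n} (Set.Iio (catalan (n - 1))) := by
  intro n
  induction n using Nat.strong_induction_on with
  | _ n IH =>
  intro hn
  rcases Nat.lt_or_ge n 2 with hsm | h2
  · -- n = 1
    interval_cases n
    have hset : {t : Brack | t.leaves = 1} = {Brack.leaf} := by
      ext t
      constructor
      · intro ht; exact leaves_eq_one ht
      · rintro rfl; rfl
    have hio : Set.Iio (catalan (1-1)) = {0} := by
      ext k; simp [Nat.lt_one_iff]
    rw [hset, hio]
    refine ⟨?_, ?_, ?_⟩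
    · rintro t rfl; simp [blabel]
    · rintro t1 rfl t2 rfl _; rfl
    · rintro k rfl; exact ⟨.leaf, rfl, rfl⟩
  · -- n ≥ 2
    -- unpack IH into the two facts we need
    have IHlt : ∀ {m} {t : Brack}, 1 ≤ m → m < n → t.leaves = m →
        blabel t < catalan (m-1) := by
      intro m t h1 h2 h3
      exact (IH m h2 h1).mapsTo h3
    have IHsurj : ∀ {m} (k : ℕ), 1 ≤ m → m < n → k < catalan (m-1) →
        ∃ t : Brack, t.leaves = m ∧ blabel t = k := by
      intro m k h1 h2 h3
      obtain ⟨t, ht, hbt⟩ := (IH m h2 h1).surjOn h3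
      exact ⟨t, ht, hbt⟩
    have IHinj : ∀ {m} {t1 t2 : Brack}, 1 ≤ m → m < n → t1.leaves = m → t2.leaves = m →
        blabel t1 = blabel t2 → t1 = t2 := by
      intro m t1 t2 h1 h2 ht1 ht2 h
      exact (IH m h2 h1).injOn ht1 ht2 h
    -- bounds for a node with n leaves
    have hbound : ∀ l r : Brack, l.leaves + r.leaves = n →
        S n r.leaves ≤ blabel (.node l r) ∧ blabel (.node l r) < catalan (n-1) ∧
        blabel (.node l r) < S n (r.leaves + 1) := by
      intro l r hlr
      have hl1 := one_le_leaves l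
      have hr1 := one_le_leaves r
      have hl : blabel l < catalan (l.leaves - 1) := IHlt hl1 (by omega) rfl
      have hr : blabel r < catalan (r.leaves - 1) := IHlt hr1 (by omega) rfl
      have hkey : blabel r * catalan (l.leaves - 1) + blabel l
          < catalan (r.leaves - 1) * catalan (n - r.leaves - 1) := by
        have hcl : catalan (l.leaves - 1) = catalan (n - r.leaves - 1) := by
          congr 1; omega
        calc blabel r * catalan (l.leaves - 1) + blabel l
            < blabel r * catalan (l.leaves - 1) + catalan (l.leaves - 1) := by omega
          _ = (blabel r + 1) * catalan (l.leaves - 1) := by ring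
          _ ≤ catalan (r.leaves - 1) * catalan (l.leaves - 1) :=
              Nat.mul_le_mul_right _ (by omega)
          _ = catalan (r.leaves - 1) * catalan (n - r.leaves - 1) := by rw [hcl]
      rw [blabel_node, hlr]
      refine ⟨by omega, ?_, ?_⟩
      · have hcl : catalan (l.leaves - 1) = catalan (n - r.leaves - 1) := by congr 1; omega
        rw [hcl]
        exact interval_bound hr1 (by omega) h2 hr (hcl ▸ hl)
      · rw [S_succ n r.leaves hr1]; omega
    refine ⟨?_, ?_, ?_⟩
    · -- MapsTo
      intro t ht
      simp only [Set.mem_setOf_eq] at ht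
      cases t with
      | leaf => simp [Brack.leaves] at ht; omega
      | node l r => exact (hbound l r ht).2.1
    · -- InjOn
      intro t1 h1 t2 ht2 heq
      simp only [Set.mem_setOf_eq] at h1 ht2
      cases t1 with
      | leaf => simp [Brack.leaves] at h1; omega
      | node l1 r1 =>
        cases t2 with
        | leaf => simp [Brack.leaves] at ht2; omega
        | node l2 r2 =>
          have hb1' := hbound l1 r1 h1
          have hb2' := hbound l2 r2 ht2
          simp only [Brack.leaves] at h1 ht2
          -- first: r1.leaves = r2.leaves
          have hm : r1.leaves = r2.leaves := by
            by_contra hne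
            obtain ⟨hlo1, _, hhi1⟩ := hb1'
            obtain ⟨hlo2, _, hhi2⟩ := hb2'
            rcases Nat.lt_or_ge r1.leaves r2.leaves with h | h
            · have := S_mono n (show r1.leaves + 1 ≤ r2.leaves by omega)
              omega
            · have := S_mono n (show r2.leaves + 1 ≤ r1.leaves by omega)
              omega
          have hl1 := one_le_leaves l1
          have hr1 := one_le_leaves r1
          have hll : l1.leaves = l2.leaves := by omega
          -- now cancel
          rw [blabel_node, blabel_node, h1, ht2 ,hm, hll] at heq
          have hcpos : 0 < catalan (l2.leaves - 1) := catalan_pos' _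
          have hb1 : blabel l1 < catalan (l2.leaves - 1) := by
            have := IHlt hl1 (show l1.leaves < n by omega) (rfl : l1.leaves = l1.leaves)
            rwa [hll] at this
          have hb2 : blabel l2 < catalan (l2.leaves - 1) := IHlt (by omega) (by omega) rfl
          have heq2 : blabel r1 * catalan (l2.leaves - 1) + blabel l1
              = blabel r2 * catalan (l2.leaves - 1) + blabel l2 := by omega
          have hq : blabel r1 = blabel r2 := by
            have e1 : (blabel r1 * catalan (l2.leaves - 1) + blabel l1) / catalan (l2.leaves - 1)
                = blabel r1 := by
              rw [Nat.mul_comm, Nat.mul_add_div hcpos, Nat.div_eq_of_lt hb1, Nat.add_zero]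
            have e2 : (blabel r2 * catalan (l2.leaves - 1) + blabel l2) / catalan (l2.leaves - 1)
                = blabel r2 := by
              rw [Nat.mul_comm, Nat.mul_add_div hcpos, Nat.div_eq_of_lt hb2, Nat.add_zero]
            rw [← e1, ← e2, heq2]
          have hrem : blabel l1 = blabel l2 := by
            have := heq2; rw [hq] at this; omega
          have er : r1 = r2 := IHinj hr1 (by omega) rfl hm.symm hq
          have el : l1 = l2 := IHinj hl1 (by omega) rfl hll.symm hrem
          rw [er, el]
    · -- SurjOn
      intro k hk
      simp only [Set.mem_Iio] at hk
      obtain ⟨j, rfl⟩ : ∃ j, n = j + 2 := ⟨n - 2, by omega⟩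
      have hSn : S (j+2) (j+2) = catalan (j+1) := S_top j
      set n := j + 2 with hndef
      have hk' : k < S n n := by
        rw [hSn]; simpa [hndef] using hk
      -- find m
      set P : ℕ → Prop := fun m => S n m ≤ k with hP
      have hP1 : P 1 := by simp [hP, S]
      set m := Nat.findGreatest P (n-1) with hm
      have hm1 : 1 ≤ m := Nat.le_findGreatest (by omega) hP1
      have hmn : m ≤ n - 1 := Nat.findGreatest_le _
      have hSm : S n m ≤ k := Nat.findGreatest_spec (by omega) hP1
      have hSm1 : k < S n (m+1) := by
        rcases Nat.lt_or_ge m (n-1) with h | h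
        · have hng := Nat.findGreatest_is_greatest (P := P) (show m < m + 1 by omega) (by omega)
          simp only [hP, not_le] at hng
          exact hng
        · have hmn' : m + 1 = n := by omega
          rw [hmn']
          omega
      have hCpos : 0 < catalan (n-m-1) := catalan_pos' _
      have hrange : k - S n m < catalan (m-1) * catalan (n-m-1) := by
        have := S_succ n m hm1
        omega
      set q := (k - S n m) / catalan (n-m-1) with hq
      set rem := (k - S n m) % catalan (n-m-1) with hrem
      have hremlt : rem < catalan (n-m-1) := Nat.mod_lt _ hCpos
      have hqlt : q < catalan (m-1) := by
        by_contra hcon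
        push_neg at hcon
        have : catalan (m-1) * catalan (n-m-1) ≤ q * catalan (n-m-1) :=
          Nat.mul_le_mul_right _ hcon
        have hle : q * catalan (n-m-1) ≤ k - S n m := Nat.div_mul_le_self _ _
        omega
      obtain ⟨r, hrl, hrb⟩ := IHsurj q hm1 (by omega) hqlt
      obtain ⟨l, hll, hlb⟩ := IHsurj rem (show 1 ≤ n - m by omega) (by omega) hremlt
      refine ⟨.node l r, ?_, ?_⟩
      · simp only [Set.mem_setOf_eq, Brack.leaves]; omega
      · rw [blabel_node, hrl, hll, hrb, hlb]
        have h1 : n - m + m = n := by omega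
        rw [h1]
        have hqm : q * catalan (n-m-1) + rem = k - S n m := by
          rw [hq, hrem, Nat.mul_comm]
          exact Nat.div_add_mod _ _
        omega

end Stmt18Aux

theorem stmt18 (n : ℕ) (hn : 1 ≤ n) :
    Set.BijOn blabel {t : Brack | t.leaves = n} (Set.Iio (catalan (n - 1))) :=
  Stmt18Aux.main n hn
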